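/- Let f : ℝ² → ℂ be integrable on the open unit square (0,1)² with respect to Lebesgue measure. Then ∫_0^1 ∫_0^1 f(ω₁, ω₂) dω₂ dω₁ = ∫_0^1 ∫_0^1 ( f(ω, ηω) + f(ηω, ω) ) · ω dω dη. -/

import Mathlib

open MeasureTheory

noncomputable def duffyL1 (x : ℝ × ℝ) : (ℝ × ℝ) →L[ℝ] (ℝ × ℝ) :=
  (ContinuousLinearMap.snd ℝ ℝ ℝ).prod
    (x.1 • ContinuousLinearMap.snd ℝ ℝ ℝ + x.2 • ContinuousLinearMap.fst ℝ ℝ ℝ)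

noncomputable def duffyL2 (x : ℝ × ℝ) : (ℝ × ℝ) →L[ℝ] (ℝ × ℝ) :=
  (x.1 • ContinuousLinearMap.snd ℝ ℝ ℝ + x.2 • ContinuousLinearMap.fst ℝ ℝ ℝ).prod
    (ContinuousLinearMap.snd ℝ ℝ ℝ)

lemma duffyL1_det (x : ℝ × ℝ) : (duffyL1 x).det = -x.2 := by
  have h : (duffyL1 x).det = LinearMap.det ((duffyL1 x) : (ℝ×ℝ) →ₗ[ℝ] (ℝ×ℝ)) := rfl
  rw [h, ← LinearMap.det_toMatrix (Module.Basis.finTwoProd ℝ), Matrix.det_fin_two]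
  simp [LinearMap.toMatrix_apply, duffyL1, Module.Basis.finTwoProd]

lemma duffyL2_det (x : ℝ × ℝ) : (duffyL2 x).det = x.2 := by
  have h : (duffyL2 x).det = LinearMap.det ((duffyL2 x) : (ℝ×ℝ) →ₗ[ℝ] (ℝ×ℝ)) := rfl
  rw [h, ← LinearMap.det_toMatrix (Module.Basis.finTwoProd ℝ), Matrix.det_fin_two]
  simp [LinearMap.toMatrix_apply, duffyL2, Module.Basis.finTwoProd]

lemma duffyL1_deriv (x : ℝ × ℝ) :
    HasFDerivAt (fun p : ℝ × ℝ => (p.2, p.1 * p.2)) (duffyL1 x) x :=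
  HasFDerivAt.prodMk hasFDerivAt_snd (HasFDerivAt.mul hasFDerivAt_fst hasFDerivAt_snd)

lemma duffyL2_deriv (x : ℝ × ℝ) :
    HasFDerivAt (fun p : ℝ × ℝ => (p.1 * p.2, p.2)) (duffyL2 x) x :=
  HasFDerivAt.prodMk (HasFDerivAt.mul hasFDerivAt_fst hasFDerivAt_snd) hasFDerivAt_snd

/-- **Duffy transform of an integral over the unit square.** For `f` integrable on
the open unit square,
`∫_0^1 ∫_0^1 f(ω₁, ω₂) dω₂ dω₁ = ∫_0^1 ∫_0^1 (f(ω, ηω) + f(ηω, ω)) ω dω dη`. -/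
theorem stmt_6 (f : ℝ × ℝ → ℂ)
    (hf : IntegrableOn f (Set.Ioo (0 : ℝ) 1 ×ˢ Set.Ioo (0 : ℝ) 1)) :
    (∫ ω₁ in Set.Ioo (0 : ℝ) 1, ∫ ω₂ in Set.Ioo (0 : ℝ) 1, f (ω₁, ω₂))
      = ∫ η in Set.Ioo (0 : ℝ) 1, ∫ ω in Set.Ioo (0 : ℝ) 1,
          (f (ω, η * ω) + f (η * ω, ω)) * (ω : ℂ) := by
  set I : Set ℝ := Set.Ioo (0 : ℝ) 1 with hIdef
  set S : Set (ℝ × ℝ) := I ×ˢ I with hSdef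
  have hS : MeasurableSet S := measurableSet_Ioo.prod measurableSet_Ioo
  set T1 : Set (ℝ × ℝ) := {p | 0 < p.2 ∧ p.2 < p.1 ∧ p.1 < 1} with hT1def
  set T2 : Set (ℝ × ℝ) := {p | 0 < p.1 ∧ p.1 < p.2 ∧ p.2 < 1} with hT2def
  have hT1m : MeasurableSet T1 := by
    have : T1 = {p : ℝ × ℝ | 0 < p.2} ∩ ({p | p.2 < p.1} ∩ {p | p.1 < 1}) := by
      ext p; simp [hT1def, and_assoc]
    rw [this]
    exact (measurableSet_lt measurable_const measurable_snd).inter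
      ((measurableSet_lt measurable_snd measurable_fst).inter
        (measurableSet_lt measurable_fst measurable_const))
  have hT2m : MeasurableSet T2 := by
    have : T2 = {p : ℝ × ℝ | 0 < p.1} ∩ ({p | p.1 < p.2} ∩ {p | p.2 < 1}) := by
      ext p; simp [hT2def, and_assoc]
    rw [this]
    exact (measurableSet_lt measurable_const measurable_fst).inter
      ((measurableSet_lt measurable_fst measurable_snd).inter
        (measurableSet_lt measurable_snd measurable_const))
  have hT1S : T1 ⊆ S := by
    rintro ⟨a, b⟩ ⟨h1, h2, h3⟩
    exact ⟨⟨h1.trans h2, h3⟩, ⟨h1, h2.trans h3⟩⟩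
  have hT2S : T2 ⊆ S := by
    rintro ⟨a, b⟩ ⟨h1, h2, h3⟩
    exact ⟨⟨h1, h2.trans h3⟩, ⟨h1.trans h2, h3⟩⟩
  -- the diagonal is null
  have hDnull : volume {p : ℝ × ℝ | p.1 = p.2} = 0 := by
    have hDm : MeasurableSet {p : ℝ × ℝ | p.1 = p.2} :=
      measurableSet_eq_fun measurable_fst measurable_snd
    rw [Measure.volume_eq_prod, Measure.prod_apply hDm]
    have : ∀ x : ℝ, (Prod.mk x ⁻¹' {p : ℝ × ℝ | p.1 = p.2}) = {x} := by
      intro x; ext y; simp [eq_comm]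
    simp [this]
  -- S is a.e. equal to T1 ∪ T2
  have hae : S =ᵐ[volume] ((T1 ∪ T2 : Set (ℝ × ℝ))) := by
    rw [MeasureTheory.ae_eq_set]
    constructor
    · refine measure_mono_null ?_ hDnull
      rintro ⟨a, b⟩ ⟨⟨⟨ha0, ha1⟩, hb0, hb1⟩, hnot⟩
      rcases lt_trichotomy a b with h | h | h
      · exact absurd (Or.inr ⟨ha0, h, hb1⟩) hnot
      · exact h
      · exact absurd (Or.inl ⟨hb0, h, ha1⟩) hnot
    · have : (T1 ∪ T2) \ S = ∅ := by
        rw [Set.diff_eq_empty]; exact Set.union_subset hT1S hT2S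
      simp [this]
  -- images
  have himg1 : (fun p : ℝ × ℝ => (p.2, p.1 * p.2)) '' S = T1 := by
    ext ⟨a, b⟩
    constructor
    · rintro ⟨⟨η, ω⟩, ⟨⟨hη0, hη1⟩, hω0, hω1⟩, h⟩
      obtain ⟨rfl, rfl⟩ := Prod.mk.injEq .. ▸ h
      exact ⟨mul_pos hη0 hω0, mul_lt_of_lt_one_left hω0 hη1, hω1⟩
    · rintro ⟨hb0, hba, ha1⟩
      have ha0 : 0 < a := hb0.trans hba
      refine ⟨(b / a, a), ⟨⟨div_pos hb0 ha0, (div_lt_one ha0).2 hba⟩, ha0, ha1⟩, ?_⟩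
      simp [div_mul_cancel₀ _ ha0.ne']
  have himg2 : (fun p : ℝ × ℝ => (p.1 * p.2, p.2)) '' S = T2 := by
    ext ⟨a, b⟩
    constructor
    · rintro ⟨⟨η, ω⟩, ⟨⟨hη0, hη1⟩, hω0, hω1⟩, h⟩
      obtain ⟨rfl, rfl⟩ := Prod.mk.injEq .. ▸ h
      exact ⟨mul_pos hη0 hω0, mul_lt_of_lt_one_left hω0 hη1, hω1⟩
    · rintro ⟨ha0, hab, hb1⟩
      have hb0 : 0 < b := ha0.trans hab
      refine ⟨(a / b, b), ⟨⟨div_pos ha0 hb0, (div_lt_one hb0).2 hab⟩, hb0, hb1⟩, ?_⟩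
      simp [div_mul_cancel₀ _ hb0.ne']
  -- injectivity
  have hinj1 : Set.InjOn (fun p : ℝ × ℝ => (p.2, p.1 * p.2)) S := by
    rintro ⟨η₁, ω₁⟩ ⟨_, hω₁⟩ ⟨η₂, ω₂⟩ _ h
    obtain ⟨h1, h2⟩ := Prod.mk.injEq .. ▸ h
    subst h1
    have := mul_right_cancel₀ (ne_of_gt hω₁.1) h2
    simpa using this
  have hinj2 : Set.InjOn (fun p : ℝ × ℝ => (p.1 * p.2, p.2)) S := by
    rintro ⟨η₁, ω₁⟩ ⟨_, hω₁⟩ ⟨η₂, ω₂⟩ _ h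
    obtain ⟨h2, h1⟩ := Prod.mk.injEq .. ▸ h
    subst h1
    have := mul_right_cancel₀ (ne_of_gt hω₁.1) h2
    simpa using this
  have hder1 : ∀ x ∈ S, HasFDerivWithinAt (fun p : ℝ × ℝ => (p.2, p.1 * p.2))
      (duffyL1 x) S x := fun x _ => (duffyL1_deriv x).hasFDerivWithinAt
  have hder2 : ∀ x ∈ S, HasFDerivWithinAt (fun p : ℝ × ℝ => (p.1 * p.2, p.2))
      (duffyL2 x) S x := fun x _ => (duffyL2_deriv x).hasFDerivWithinAt
  -- change of variables for each triangle
  have hcv1 : ∫ p in T1, f p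
      = ∫ x in S, |(duffyL1 x).det| • f (x.2, x.1 * x.2) := by
    rw [← himg1]
    exact integral_image_eq_integral_abs_det_fderiv_smul volume hS hder1 hinj1 f
  have hcv2 : ∫ p in T2, f p
      = ∫ x in S, |(duffyL2 x).det| • f (x.1 * x.2, x.2) := by
    rw [← himg2]
    exact integral_image_eq_integral_abs_det_fderiv_smul volume hS hder2 hinj2 f
  -- integrability of the transformed functions
  have hint1 : IntegrableOn (fun x : ℝ × ℝ => |(duffyL1 x).det| • f (x.2, x.1 * x.2)) S := by
    have := (integrableOn_image_iff_integrableOn_abs_det_fderiv_smul volume hS hder1 hinj1 f).1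
      (himg1 ▸ hf.mono_set hT1S)
    exact this
  have hint2 : IntegrableOn (fun x : ℝ × ℝ => |(duffyL2 x).det| • f (x.1 * x.2, x.2)) S := by
    have := (integrableOn_image_iff_integrableOn_abs_det_fderiv_smul volume hS hder2 hinj2 f).1
      (himg2 ▸ hf.mono_set hT2S)
    exact this
  -- left side via Fubini
  have hLHS : (∫ ω₁ in I, ∫ ω₂ in I, f (ω₁, ω₂)) = ∫ p in S, f p := by
    rw [hSdef, Measure.volume_eq_prod, setIntegral_prod f]
    rwa [← Measure.volume_eq_prod]
  rw [hLHS, setIntegral_congr_set hae,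
    setIntegral_union ?disj hT2m (hf.mono_set hT1S) (hf.mono_set hT2S), hcv1, hcv2,
    ← integral_add hint1 hint2]
  case disj =>
    rw [Set.disjoint_left]
    rintro ⟨a, b⟩ ⟨_, h2, _⟩ ⟨_, h2', _⟩
    exact absurd (h2.trans h2') (lt_irrefl _)
  -- now identify with the RHS
  have hRHS : (∫ η in I, ∫ ω in I,
        (f (ω, η * ω) + f (η * ω, ω)) * (ω : ℂ))
      = ∫ x in S, (f (x.2, x.1 * x.2) + f (x.1 * x.2, x.2)) * (x.2 : ℂ) := by
    rw [hSdef, Measure.volume_eq_prod,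
      setIntegral_prod (fun x : ℝ × ℝ => (f (x.2, x.1 * x.2) + f (x.1 * x.2, x.2)) * (x.2 : ℂ))]
    rw [← Measure.volume_eq_prod]
    have hadd : IntegrableOn (fun x : ℝ × ℝ =>
        |(duffyL1 x).det| • f (x.2, x.1 * x.2) + |(duffyL2 x).det| • f (x.1 * x.2, x.2)) S :=
      hint1.add hint2
    refine hadd.congr_fun ?_ hS
    rintro ⟨η, ω⟩ ⟨_, hω0, _⟩
    simp only [duffyL1_det, duffyL2_det, abs_neg, abs_of_pos hω0]
    simp [Complex.real_smul]
    ring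
  rw [hRHS]
  refine setIntegral_congr_fun hS ?_
  rintro ⟨η, ω⟩ ⟨_, hω0, _⟩
  simp only [duffyL1_det, duffyL2_det, abs_neg, abs_of_pos hω0, Complex.real_smul]
  ring
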